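/- For every integer r ≥ 1 and every integer n ≥ 2, N(n,r,0) = 2·N(n-1,r,0) - N(n-r,r,0) + N(n-r-1,r,0), where by convention N(m,r,0) = 0 for every negative integer m. -/

import Mathlib

/-- The list of maximal runs of a binary word. -/
def runs (w : List Bool) : List (List Bool) := w.splitBy (· == ·)

/-- The number of maximal runs of length `r` in a binary word. -/
def runCount (w : List Bool) (r : ℕ) : ℕ :=
  ((runs w).filter (fun g => g.length = r)).length

/-- The number of maximal runs of 1s of length `r` in a binary word. -/
def oneRunCount (w : List Bool) (r : ℕ) : ℕ :=
  ((runs w).filter (fun g => g.length = r ∧ g.head? = some true)).length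

/-- `N n r k`: the number of binary words of length `n` that begin with `0`
(the empty word counts when `n = 0`) and contain exactly `k` maximal runs of length `r`. -/
def N (n r k : ℕ) : ℕ :=
  Fintype.card {w : Fin n → Bool //
    (List.ofFn w).head? ≠ some true ∧ runCount (List.ofFn w) r = k}

/-- `M n r k`: the number of binary words of length `n` that begin with `0`
and contain exactly `k` maximal runs of 1s of length `r`. -/
def M (n r k : ℕ) : ℕ :=
  Fintype.card {w : Fin n → Bool //
    (List.ofFn w).head? ≠ some true ∧ oneRunCount (List.ofFn w) r = k}

/-- `N` extended to integer lengths, vanishing for negative lengths. -/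
def Nz (m : ℤ) (r k : ℕ) : ℤ := if 0 ≤ m then (N m.toNat r k : ℤ) else 0

open List



theorem loop_eq_append (R : Bool → Bool → Bool) (l : List Bool) (a : Bool) (g : List Bool)
    (gs : List (List Bool)) :
    splitBy.loop R l a g gs = gs.reverse ++ splitBy.loop R l a g [] := by
  induction l generalizing a g gs with
  | nil => simp [splitBy.loop]
  | cons b l ih =>
    simp only [splitBy.loop]
    cases R a b
    · rw [ih _ _ (((a :: g).reverse :: gs)), ih _ _ [((a :: g).reverse)]]
      simp
    · exact ih _ _ _

theorem loop_replicate (c : Bool) (l : List Bool) (j : ℕ) (g : List Bool) (gs : List (List Bool)) :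
    splitBy.loop (· == ·) (replicate j c ++ l) c g gs
      = splitBy.loop (· == ·) l c (replicate j c ++ g) gs := by
  induction j generalizing g with
  | zero => simp
  | succ j ih =>
    rw [replicate_succ, cons_append]
    simp only [splitBy.loop, beq_self_eq_true]
    rw [ih]
    congr 1
    rw [show c :: g = [c] ++ g from rfl, ← List.append_assoc,
      ← List.replicate_succ', List.replicate_succ]

theorem splitBy_replicate_append (c : Bool) (j : ℕ) (l : List Bool) (hl : l.head? ≠ some c) :
    (List.replicate (j+1) c ++ l).splitBy (· == ·)
      = List.replicate (j+1) c :: l.splitBy (· == ·) := by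
  rw [replicate_succ, cons_append, splitBy, loop_replicate]
  cases l with
  | nil => simp [splitBy.loop, ← List.replicate_succ', List.replicate_succ]
  | cons d t =>
    have hd : (c == d) = false := by
      cases c <;> cases d <;> simp_all
    simp only [splitBy.loop, hd]
    rw [loop_eq_append, splitBy]
    simp [← List.replicate_succ', List.replicate_succ]


theorem runCount_replicate_append (j r : ℕ) (l : List Bool) (hl : l.head? ≠ some false) :
    runCount (replicate (j+1) false ++ l) r
      = (if j+1 = r then 1 else 0) + runCount l r := by
  unfold runCount runs
  rw [splitBy_replicate_append false j l hl, filter_cons]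
  simp only [length_replicate]
  by_cases h : j + 1 = r <;> simp [h, Nat.add_comm]

theorem loop_map_not (l : List Bool) (a : Bool) (g : List Bool) (gs : List (List Bool)) :
    splitBy.loop (· == ·) (l.map not) (!a) (g.map not) (gs.map (List.map not))
      = (splitBy.loop (· == ·) l a g gs).map (List.map not) := by
  induction l generalizing a g gs with
  | nil => simp [splitBy.loop]
  | cons b l ih =>
    simp only [map_cons, splitBy.loop]
    have : ((!a) == !b) = (a == b) := by cases a <;> cases b <;> rfl
    rw [this]
    cases a == b
    · have := ih b [] (((a :: g).reverse :: gs))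
      simpa using this
    · have := ih b (a :: g) gs
      simpa using this

theorem runs_map_not (l : List Bool) : runs (l.map not) = (runs l).map (List.map not) := by
  cases l with
  | nil => simp [runs]
  | cons a t =>
    unfold runs
    rw [map_cons, splitBy, splitBy]
    have := loop_map_not t a [] []
    simpa using this

theorem runCount_map_not (l : List Bool) (r : ℕ) : runCount (l.map not) r = runCount l r := by
  unfold runCount
  rw [runs_map_not, ← countP_eq_length_filter, ← countP_eq_length_filter, countP_map]
  apply countP_congr
  intro g _
  simp

theorem head?_dropWhile_beq_false (l : List Bool) (c a : Bool)
    (h : (l.dropWhile (· == c)).head? = some a) : a ≠ c := by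
  induction l with
  | nil => simp at h
  | cons b t ih =>
    rw [dropWhile_cons] at h
    by_cases hb : b = c
    · simp [hb] at h; exact ih h
    · simp [hb] at h
      rw [← h]; exact hb

theorem takeWhile_replicate_append (k : ℕ) (t : List Bool) (ht : t.head? ≠ some false) :
    (replicate k false ++ t).takeWhile (· == false) = replicate k false := by
  induction k with
  | zero =>
    simp only [replicate_zero, nil_append]
    cases t with
    | nil => rfl
    | cons d s =>
      have : d = true := by cases d <;> simp_all
      simp [takeWhile_cons, this]
  | succ k ih =>
    rw [replicate_succ, cons_append, takeWhile_cons, if_pos (by rfl), ih]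



def Lset (n : ℕ) : Finset (List Bool) :=
  (Finset.univ : Finset (Fin n → Bool)).image List.ofFn

theorem mem_Lset {n : ℕ} {l : List Bool} : l ∈ Lset n ↔ l.length = n := by
  constructor
  · intro h
    simp only [Lset, Finset.mem_image] at h
    obtain ⟨w, -, rfl⟩ := h
    simp
  · intro h
    subst h
    exact Finset.mem_image.2 ⟨l.get, Finset.mem_univ _, List.ofFn_get l⟩

theorem N_eq (n r k : ℕ) :
    N n r k
      = ((Lset n).filter (fun l => l.head? ≠ some true ∧ runCount l r = k)).card := by
  rw [N, Fintype.card_subtype, Lset, Finset.filter_image,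
    Finset.card_image_of_injective _ List.ofFn_injective]

theorem map_not_mem {n r : ℕ} {c : Bool} {l : List Bool}
    (h : l ∈ (Lset n).filter (fun l => l.head? ≠ some c ∧ runCount l r = 0)) :
    l.map not ∈ (Lset n).filter (fun l => l.head? ≠ some (!c) ∧ runCount l r = 0) := by
  simp only [Finset.mem_filter, mem_Lset] at *
  obtain ⟨hlen, hh, hc⟩ := h
  refine ⟨by simpa using hlen, ?_, by rwa [runCount_map_not]⟩
  cases l with
  | nil => simp
  | cons a t =>
    simp only [head?_cons, map_cons] at hh ⊢
    cases a <;> cases c <;> simp_all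

theorem map_not_map_not (l : List Bool) : (l.map not).map not = l := by
  rw [map_map]
  simp [Function.comp_def]

theorem Bc_eq (n r : ℕ) :
    ((Lset n).filter (fun l => l.head? ≠ some false ∧ runCount l r = 0)).card
      = N n r 0 := by
  rw [N_eq]
  refine Finset.card_bij' (fun l _ => l.map not) (fun l _ => l.map not)
    (fun l hl => by simpa using map_not_mem (c := false) hl)
    (fun l hl => by simpa using map_not_mem (c := true) hl)
    (fun l _ => map_not_map_not l) (fun l _ => map_not_map_not l)

theorem fiber_decomp {j : ℕ} {l : List Bool}
    (hne : l ≠ []) (hh : l.head? ≠ some true)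
    (hj : (l.takeWhile (· == false)).length - 1 = j) :
    l = replicate (j+1) false ++ l.drop (j+1) ∧ (l.drop (j+1)).head? ≠ some false := by
  have hhead : l.head? = some false := by
    cases l with
    | nil => simp at hne
    | cons a t =>
      cases a with
      | false => rfl
      | true => simp at hh
  have htw1 : 1 ≤ (l.takeWhile (· == false)).length := by
    cases l with
    | nil => simp at hne
    | cons a t =>
      have : a = false := by simpa using hhead
      subst this
      rw [takeWhile_cons, if_pos (by rfl)]
      simp
  have htwlen : (l.takeWhile (· == false)).length = j + 1 := by omega
  have htwrep : l.takeWhile (· == false) = replicate (j+1) false := by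
    rw [← htwlen]
    apply eq_replicate_of_mem
    intro b hb
    have := mem_takeWhile_imp hb
    simpa using this
  have hdecomp : l = replicate (j+1) false ++ l.dropWhile (· == false) := by
    conv_lhs => rw [← takeWhile_append_dropWhile (p := (· == false)) (l := l)]
    rw [htwrep]
  have hdrop : l.drop (j+1) = l.dropWhile (· == false) := by
    conv_lhs => rw [hdecomp]
    exact drop_left' (by simp)
  constructor
  · rw [hdrop]; exact hdecomp
  · rw [hdrop]
    intro hcon
    exact head?_dropWhile_beq_false l false false hcon rfl

theorem sum_step (r n : ℕ) (hn : 1 ≤ n) :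
    N n r 0 = ∑ j ∈ Finset.range n, (if j + 1 = r then 0 else N (n - (j+1)) r 0) := by
  rw [N_eq]
  rw [Finset.card_eq_sum_card_fiberwise
    (f := fun l => (l.takeWhile (· == false)).length - 1) (t := Finset.range n)
    (fun l hl => by
      simp only [Finset.coe_filter, Set.mem_setOf_eq, Finset.mem_coe, Finset.mem_filter, mem_Lset] at hl
      have h1 : (l.takeWhile (· == false)).length ≤ l.length :=
        (takeWhile_sublist _).length_le
      simp only [Finset.coe_range, Set.mem_Iio, Finset.mem_coe, Finset.mem_range]
      omega)]
  apply Finset.sum_congr rfl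
  intro j hj
  rw [Finset.mem_range] at hj
  rw [Finset.filter_filter]
  by_cases hjr : j + 1 = r
  · rw [if_pos hjr]
    rw [Finset.card_eq_zero, Finset.eq_empty_iff_forall_notMem]
    intro l hl
    simp only [Finset.mem_filter, mem_Lset] at hl
    obtain ⟨hlen, ⟨hh, hrc⟩, hfib⟩ := hl
    have hne : l ≠ [] := by intro h; subst h; simp at hlen; omega
    obtain ⟨hdec, hhd⟩ := fiber_decomp hne hh hfib
    rw [hdec, runCount_replicate_append j r _ hhd, if_pos hjr] at hrc
    omega
  · rw [if_neg hjr, ← Bc_eq (n - (j+1)) r]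
    refine Finset.card_bij' (fun l _ => l.drop (j+1))
      (fun t _ => replicate (j+1) false ++ t) ?_ ?_ ?_ ?_
    · intro l hl
      simp only [Finset.mem_filter, mem_Lset] at hl ⊢
      obtain ⟨hlen, ⟨hh, hrc⟩, hfib⟩ := hl
      have hne : l ≠ [] := by intro h; subst h; simp at hlen; omega
      obtain ⟨hdec, hhd⟩ := fiber_decomp hne hh hfib
      have hlen' : (l.drop (j+1)).length = n - (j+1) := by
        rw [length_drop, hlen]
      rw [hdec, runCount_replicate_append j r _ hhd, if_neg hjr] at hrc
      exact ⟨hlen', hhd, by omega⟩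
    · intro t ht
      simp only [Finset.mem_filter, mem_Lset] at ht ⊢
      obtain ⟨hlen, hh, hrc⟩ := ht
      refine ⟨by simp [hlen]; omega, ⟨?_, ?_⟩, ?_⟩
      · rw [replicate_succ, cons_append]
        simp
      · rw [runCount_replicate_append j r _ hh, if_neg hjr, hrc]
      · rw [takeWhile_replicate_append (j+1) t hh, length_replicate]
        omega
    · intro l hl
      simp only [Finset.mem_filter, mem_Lset] at hl
      obtain ⟨hlen, ⟨hh, hrc⟩, hfib⟩ := hl
      have hne : l ≠ [] := by intro h; subst h; simp at hlen; omega
      obtain ⟨hdec, hhd⟩ := fiber_decomp hne hh hfib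
      exact hdec.symm
    · intro t ht
      exact drop_left' (by simp)

theorem sum_formula (r n : ℕ) (hr : 1 ≤ r) (hn : 1 ≤ n) :
    N n r 0 + (if r ≤ n then N (n - r) r 0 else 0) = ∑ m ∈ Finset.range n, N m r 0 := by
  rw [sum_step r n hn]
  rw [← Finset.sum_range_reflect (fun j => if j + 1 = r then 0 else N (n - (j+1)) r 0) n]
  have hcong : ∀ j ∈ Finset.range n,
      (if (n - 1 - j) + 1 = r then 0 else N (n - ((n - 1 - j)+1)) r 0)
        = (if n - j = r then 0 else N j r 0) := by
    intro j hj
    rw [Finset.mem_range] at hj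
    have h1 : n - 1 - j + 1 = n - j := by omega
    have h2 : n - (n - j) = j := by omega
    rw [h1, h2]
  rw [Finset.sum_congr rfl hcong]
  by_cases hrn : r ≤ n
  · rw [if_pos hrn]
    have hmem : n - r ∈ Finset.range n := by
      rw [Finset.mem_range]; omega
    rw [← Finset.sum_erase_add _ _ hmem, ← Finset.sum_erase_add _ _ hmem]
    have : (if n - (n - r) = r then 0 else N (n - r) r 0) = 0 := by
      rw [if_pos (by omega)]
    rw [this, Nat.add_zero]
    congr 1
    apply Finset.sum_congr rfl
    intro j hj
    rw [Finset.mem_erase, Finset.mem_range] at hj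
    rw [if_neg (by omega)]
  · rw [if_neg hrn, Nat.add_zero]
    apply Finset.sum_congr rfl
    intro j hj
    rw [Finset.mem_range] at hj
    rw [if_neg (by omega)]

theorem nat_rec (r k : ℕ) (hr : 1 ≤ r) (hk : 2 ≤ k) :
    N k r 0 + (if r ≤ k then N (k - r) r 0 else 0)
      = 2 * N (k-1) r 0 + (if r ≤ k - 1 then N (k-1-r) r 0 else 0) := by
  have h1 := sum_formula r k hr (by omega)
  have h2 := sum_formula r (k-1) hr (by omega)
  have h3 : ∑ m ∈ Finset.range k, N m r 0
      = ∑ m ∈ Finset.range (k-1), N m r 0 + N (k-1) r 0 := by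
    conv_lhs => rw [show k = (k-1)+1 by omega, Finset.sum_range_succ]
  omega

theorem Nz_natCast (m r : ℕ) : Nz (m : ℤ) r 0 = (N m r 0 : ℤ) := by
  simp [Nz]

/-- for `n ≥ 2`,
`N(n,r,0) = 2 N(n-1,r,0) - N(n-r,r,0) + N(n-r-1,r,0)`, with the convention
that `N` vanishes at negative lengths. -/
theorem N_recursion (r : ℕ) (hr : 1 ≤ r) (n : ℤ) (hn : 2 ≤ n) :
    Nz n r 0 = 2 * Nz (n - 1) r 0 - Nz (n - r) r 0 + Nz (n - r - 1) r 0 := by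

  obtain ⟨k, rfl⟩ := Int.eq_ofNat_of_zero_le (le_trans (by norm_num) hn)
  have hk : 2 ≤ k := by exact_mod_cast hn
  have key := nat_rec r k hr hk
  have e1 : ((k : ℕ) : ℤ) - 1 = ((k - 1 : ℕ) : ℤ) := by omega
  rw [e1, Nz_natCast, Nz_natCast]
  by_cases h2 : r ≤ k
  · have e2 : ((k : ℕ) : ℤ) - r = ((k - r : ℕ) : ℤ) := by omega
    rw [e2, Nz_natCast]
    by_cases h3 : r + 1 ≤ k
    · have e3 : ((k - r : ℕ) : ℤ) - 1 = ((k - r - 1 : ℕ) : ℤ) := by omega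
      rw [e3, Nz_natCast]
      rw [if_pos h2, if_pos (by omega : r ≤ k - 1)] at key
      have hkr : k - 1 - r = k - r - 1 := by omega
      rw [hkr] at key
      have key' : (N k r 0 : ℤ) + N (k - r) r 0 = 2 * N (k-1) r 0 + N (k-r-1) r 0 := by
        exact_mod_cast key
      linarith
    · -- r = k
      have hrk : r = k := by omega
      rw [Nz, if_neg (by omega)]
      rw [if_pos h2, if_neg (by omega : ¬ r ≤ k - 1)] at key
      have key' : (N k r 0 : ℤ) + N (k - r) r 0 = 2 * N (k-1) r 0 := by
        exact_mod_cast key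
      linarith
  · rw [Nz, if_neg (by omega), Nz, if_neg (by omega)]
    rw [if_neg h2, if_neg (by omega : ¬ r ≤ k - 1)] at key
    have key' : (N k r 0 : ℤ) = 2 * N (k-1) r 0 := by exact_mod_cast key
    linarith
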